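/- Let A be a 6-by-6 reciprocal matrix. The Hermitian matrix Im A has an eigenvalue of algebraic multiplicity at least 2 if and only if one of the following (mutually exclusive) conditions holds: (i) ξ₁ξ₃ξ₅ = 0; (ii) ξ₂ = ξ₄ = 0, ξ₁ξ₃ξ₅ ≠ 0, and ξ₁, ξ₃, ξ₅ are not all distinct; (iii) ξ₂ = 0, ξ₁ξ₃ξ₄ξ₅ ≠ 0, and ξ₁ξ₄ = (ξ₁ − ξ₅)(ξ₁ − ξ₃); (iv) ξ₄ = 0, ξ₁ξ₂ξ₃ξ₅ ≠ 0, and ξ₂ξ₅ = (ξ₁ − ξ₅)(ξ₃ − ξ₅). (This is the criterion for the Kippenhahn curve of A to have multiple tangent lines.) -/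

import Mathlib

open Matrix Polynomial

set_option maxRecDepth 8000

/-- A tridiagonal complex matrix with zero main diagonal whose symmetric
off-diagonal entries have pairwise products equal to one. -/
def IsReciprocal {n : ℕ} (A : Matrix (Fin n) (Fin n) ℂ) : Prop :=
  (∀ i j : Fin n, ((i : ℤ) - (j : ℤ)) ^ 2 ≠ 1 → A i j = 0) ∧
  ∀ i j : Fin n, (j : ℕ) = (i : ℕ) + 1 → A i j * A j i = 1

/-- The Hermitian matrix `Im A = (A - A*)/(2i)`. -/
noncomputable def imPart {n : ℕ} (A : Matrix (Fin n) (Fin n) ℂ) :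
    Matrix (Fin n) (Fin n) ℂ :=
  (2 * Complex.I)⁻¹ • (A - Aᴴ)


lemma det_tridiag6 {R : Type*} [CommRing R] (x p0 p1 p2 p3 p4 q0 q1 q2 q3 q4 : R) :
    Matrix.det !![x,p0,0,0,0,0; q0,x,p1,0,0,0; 0,q1,x,p2,0,0; 0,0,q2,x,p3,0;
        0,0,0,q3,x,p4; 0,0,0,0,q4,x]
    = x^6 - (p0*q0+p1*q1+p2*q2+p3*q3+p4*q4)*x^4
      + (p0*q0*p2*q2+p0*q0*p3*q3+p0*q0*p4*q4+p1*q1*p3*q3+p1*q1*p4*q4+p2*q2*p4*q4)*x^2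
      - p0*q0*p2*q2*p4*q4 := by
  simp [Matrix.det_succ_row_zero, Fin.sum_univ_succ]
  simp [Fin.succAbove, Fin.lt_def]
  ring

noncomputable def P6 (e1 e2 e3 : ℝ) : Polynomial ℂ :=
  X^6 - C (e1:ℂ) * X^4 + C (e2:ℂ) * X^2 - C (e3:ℂ)

lemma P6_ne_zero (e1 e2 e3 : ℝ) : P6 e1 e2 e3 ≠ 0 := by
  intro h
  have := congrArg (fun p => Polynomial.coeff p 6) h
  simp [P6, coeff_X_pow] at this

lemma P6_mult_iff (e1 e2 e3 : ℝ) (μ : ℂ) :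
    2 ≤ (P6 e1 e2 e3).rootMultiplicity μ ↔ (X - C μ)^2 ∣ P6 e1 e2 e3 :=
  (le_rootMultiplicity_iff (P6_ne_zero e1 e2 e3)).trans Iff.rfl

lemma P6_mult_of_e3_zero (e1 e2 e3 : ℝ) (he3 : e3 = 0) :
    ∃ μ : ℂ, 2 ≤ (P6 e1 e2 e3).rootMultiplicity μ := by
  refine ⟨0, (P6_mult_iff _ _ _ _).mpr ⟨X^4 - C (e1:ℂ)*X^2 + C (e2:ℂ), ?_⟩⟩
  subst he3
  unfold P6
  push_cast
  simp only [map_zero]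
  ring

lemma P6_mult_extract (e1 e2 e3 : ℝ) (h : ∃ μ : ℂ, 2 ≤ (P6 e1 e2 e3).rootMultiplicity μ) :
    e3 = 0 ∨ ∃ y : ℂ,
      y^3 - (e1:ℂ)*y^2 + (e2:ℂ)*y - (e3:ℂ) = 0 ∧ 3*y^2 - 2*(e1:ℂ)*y + (e2:ℂ) = 0 := by
  obtain ⟨μ, hμ⟩ := h
  obtain ⟨k, hk⟩ := (P6_mult_iff _ _ _ _).mp hμ
  have hev : μ^6 - (e1:ℂ)*μ^4 + (e2:ℂ)*μ^2 - (e3:ℂ) = 0 := by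
    have := congrArg (Polynomial.eval μ) hk
    simpa [P6] using this
  have hev' : 6*μ^5 - 4*(e1:ℂ)*μ^3 + 2*(e2:ℂ)*μ = 0 := by
    have := congrArg (fun p => Polynomial.eval μ (derivative p)) hk
    simp only [P6] at this
    simp [derivative_mul, derivative_pow, derivative_X_pow] at this
    linear_combination this
  by_cases hμ0 : μ = 0
  · left
    have : (e3:ℂ) = 0 := by rw [hμ0] at hev; linear_combination -hev
    exact_mod_cast this
  · right
    refine ⟨μ^2, by linear_combination hev, ?_⟩
    have h2 : μ * (2*(3*(μ^2)^2 - 2*(e1:ℂ)*μ^2 + (e2:ℂ))) = 0 := by linear_combination hev'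
    rcases mul_eq_zero.mp h2 with h | h
    · exact absurd h hμ0
    · linear_combination h/2

lemma P6_mult_of_mw (e1 e2 e3 m w : ℝ) (hm : 0 ≤ m)
    (he1 : e1 = 2*m + w) (he2 : e2 = m^2 + 2*m*w) (he3 : e3 = m^2*w) :
    ∃ μ : ℂ, 2 ≤ (P6 e1 e2 e3).rootMultiplicity μ := by
  refine ⟨(Real.sqrt m : ℂ), (P6_mult_iff _ _ _ _).mpr ?_⟩
  have hμ : (C ((Real.sqrt m : ℝ) : ℂ))^2 = C ((m : ℝ) : ℂ) := by
    rw [← map_pow]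
    congr 1
    rw [← Complex.ofReal_pow, Real.sq_sqrt hm]
  refine ⟨(X + C ((Real.sqrt m : ℝ):ℂ))^2 * (X^2 - C ((w:ℝ):ℂ)), ?_⟩
  subst he1 he2 he3
  unfold P6
  push_cast
  simp only [_root_.map_add, _root_.map_mul, _root_.map_pow, _root_.map_ofNat]
  linear_combination (2*(X:Polynomial ℂ)^2 - C ((m:ℝ):ℂ) - (C ((Real.sqrt m:ℝ):ℂ))^2) * (X^2 - C ((w:ℝ):ℂ)) * hμ

lemma complex_to_real (e1 e2 e3 : ℝ) (y : ℂ)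
    (hq : y^3 - (e1:ℂ)*y^2 + (e2:ℂ)*y - (e3:ℂ) = 0)
    (hq' : 3*y^2 - 2*(e1:ℂ)*y + (e2:ℂ) = 0) :
    ∃ u : ℝ, u^3 - e1*u^2 + e2*u - e3 = 0 ∧ 3*u^2 - 2*e1*u + e2 = 0 := by
  set u := y.re with hu
  set v := y.im with hv
  have hreq : (y^3 - (e1:ℂ)*y^2 + (e2:ℂ)*y - (e3:ℂ)).re = 0 := by rw [hq]; rfl
  have himq : (y^3 - (e1:ℂ)*y^2 + (e2:ℂ)*y - (e3:ℂ)).im = 0 := by rw [hq]; rfl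
  have hreq' : (3*y^2 - 2*(e1:ℂ)*y + (e2:ℂ)).re = 0 := by rw [hq']; rfl
  simp [Complex.mul_re, Complex.mul_im, pow_succ, ← hu, ← hv] at hreq himq hreq'
  have hv3 : 2*v^3 = 0 := by linear_combination himq - v * hreq'
  have hv0 : v = 0 := by
    have : v^3 = 0 := by linarith
    exact pow_eq_zero_iff (by norm_num) |>.mp this
  rw [hv0] at hreq hreq'
  exact ⟨u, by linear_combination hreq, by linear_combination hreq'⟩

lemma reverse_real (x1 x2 x3 x4 x5 : ℝ)
    (n1 : 0 ≤ x1) (n2 : 0 ≤ x2) (n3 : 0 ≤ x3) (n4 : 0 ≤ x4) (n5 : 0 ≤ x5)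
    (hx : x1*x3*x5 ≠ 0) (u : ℝ)
    (hq : u^3 - (x1+x2+x3+x4+x5)*u^2 + (x1*x3+x1*x4+x1*x5+x2*x4+x2*x5+x3*x5)*u
        - x1*x3*x5 = 0)
    (hq' : 3*u^2 - 2*(x1+x2+x3+x4+x5)*u + (x1*x3+x1*x4+x1*x5+x2*x4+x2*x5+x3*x5) = 0) :
    (x2 = 0 ∧ x4 = 0 ∧ x1*x3*x5 ≠ 0 ∧ (x1 = x3 ∨ x1 = x5 ∨ x3 = x5)) ∨
    (x2 = 0 ∧ x1*x3*x4*x5 ≠ 0 ∧ x1*x4 = (x1-x5)*(x1-x3)) ∨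
    (x4 = 0 ∧ x1*x2*x3*x5 ≠ 0 ∧ x2*x5 = (x1-x5)*(x3-x5)) := by
  have h1 : x1 ≠ 0 := fun h => hx (by rw [h]; ring)
  have h3 : x3 ≠ 0 := fun h => hx (by rw [h]; ring)
  have h5 : x5 ≠ 0 := fun h => hx (by rw [h]; ring)
  have p1 : 0 < x1 := lt_of_le_of_ne n1 (Ne.symm h1)
  have p3 : 0 < x3 := lt_of_le_of_ne n3 (Ne.symm h3)
  have p5 : 0 < x5 := lt_of_le_of_ne n5 (Ne.symm h5)
  have hu : 0 < u := by
    by_contra hc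
    push_neg at hc
    nlinarith [mul_pos (mul_pos p1 p3) p5, sq_nonneg u,
      mul_nonneg (mul_nonneg n1 n3) (neg_nonneg.mpr hc),
      mul_nonneg (mul_nonneg n1 n4) (neg_nonneg.mpr hc),
      mul_nonneg (mul_nonneg n1 n5) (neg_nonneg.mpr hc),
      mul_nonneg (mul_nonneg n2 n4) (neg_nonneg.mpr hc),
      mul_nonneg (mul_nonneg n2 n5) (neg_nonneg.mpr hc),
      mul_nonneg (mul_nonneg n3 n5) (neg_nonneg.mpr hc),
      mul_nonneg (add_nonneg (add_nonneg (add_nonneg (add_nonneg n1 n2) n3) n4) n5) (sq_nonneg u),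
      mul_nonneg (mul_nonneg (neg_nonneg.mpr hc) (neg_nonneg.mpr hc)) (neg_nonneg.mpr hc)]
  by_cases h2 : x2 = 0
  · by_cases h4 : x4 = 0
    · -- case A
      subst h2 h4
      left
      refine ⟨rfl, rfl, hx, ?_⟩
      have hfac : (u - x1) * ((u - x3) * (u - x5)) = 0 := by linear_combination hq
      rcases mul_eq_zero.mp hfac with h | h
      · have hux : u = x1 := by linarith [sub_eq_zero.mp h]
        subst hux
        have : (u - x3) * (u - x5) = 0 := by linear_combination hq'
        rcases mul_eq_zero.mp this with h | h
        · exact Or.inl (by linarith [sub_eq_zero.mp h])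
        · exact Or.inr (Or.inl (by linarith [sub_eq_zero.mp h]))
      · rcases mul_eq_zero.mp h with h | h
        · have hux : u = x3 := by linarith [sub_eq_zero.mp h]
          subst hux
          have : (u - x1) * (u - x5) = 0 := by linear_combination hq'
          rcases mul_eq_zero.mp this with h | h
          · exact Or.inl (by linarith [sub_eq_zero.mp h])
          · exact Or.inr (Or.inr (by linarith [sub_eq_zero.mp h]))
        · have hux : u = x5 := by linarith [sub_eq_zero.mp h]
          subst hux
          have : (u - x1) * (u - x3) = 0 := by linear_combination hq'
          rcases mul_eq_zero.mp this with h | h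
          · exact Or.inr (Or.inl (by linarith [sub_eq_zero.mp h]))
          · exact Or.inr (Or.inr (by linarith [sub_eq_zero.mp h]))
    · -- case B : x2 = 0, x4 ≠ 0
      subst h2
      have p4 : 0 < x4 := lt_of_le_of_ne n4 (Ne.symm h4)
      right; left
      refine ⟨rfl, by positivity, ?_⟩
      have hfac : (u - x1) * (u^2 - (x3+x4+x5)*u + x3*x5) = 0 := by linear_combination hq
      have hkey : u = x1 → x1*x4 = (x1-x5)*(x1-x3) := by
        intro hux
        subst hux
        linear_combination -hq'
      rcases mul_eq_zero.mp hfac with h | hg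
      · exact hkey (by linarith [sub_eq_zero.mp h])
      · have hprod : (u - x1) * (2*u - (x3+x4+x5)) = 0 := by linear_combination hq' - hg
        rcases mul_eq_zero.mp hprod with h | h
        · have hux : u = x1 := by linarith [sub_eq_zero.mp h]
          subst hux
          linear_combination -hg
        · exfalso
          nlinarith [hg, h, sq_nonneg (x3 - x5), mul_pos p3 p5, mul_pos p4 (add_pos p3 p5)]
  · have p2 : 0 < x2 := lt_of_le_of_ne n2 (Ne.symm h2)
    by_cases h4 : x4 = 0
    · -- case C : x4 = 0, x2 ≠ 0
      subst h4
      right; right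
      refine ⟨rfl, by positivity, ?_⟩
      have hfac : (u - x5) * (u^2 - (x1+x2+x3)*u + x1*x3) = 0 := by linear_combination hq
      rcases mul_eq_zero.mp hfac with h | hg
      · have hux : u = x5 := by linarith [sub_eq_zero.mp h]
        subst hux
        linear_combination -hq'
      · have hprod : (u - x5) * (2*u - (x1+x2+x3)) = 0 := by linear_combination hq' - hg
        rcases mul_eq_zero.mp hprod with h | h
        · have hux : u = x5 := by linarith [sub_eq_zero.mp h]
          subst hux
          linear_combination -hg
        · exfalso
          nlinarith [hg, h, sq_nonneg (x1 - x3), mul_pos p1 p3, mul_pos p2 (add_pos p1 p3)]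
    · -- case D : x2 ≠ 0, x4 ≠ 0 : impossible (Wronskian)
      exfalso
      have p4 : 0 < x4 := lt_of_le_of_ne n4 (Ne.symm h4)
      have key : x5*(u*(u-x1-x2) - x3*(u-x1))^2 + x3*x4*x5*(u-x1)^2
          + u*((u*(u-x1-x2) - x3*(u-x1) - x4*(u-x1-x2))^2 + x4*x5*(u-x1-x2)^2
              + x2*x3*x4*x5)
          + x1*x2*x3*x4*x5 = 0 := by
        linear_combination (2*u*(u*(u-x1-x2) - x3*(u-x1) - x4*(u-x1-x2)))*hq'
          - ((u*(u-x1-x2) - x3*(u-x1) - x4*(u-x1-x2)) + 2*u*(2*u - (x1+x2+x3+x4)))*hq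
      nlinarith [mul_nonneg n5 (sq_nonneg (u*(u-x1-x2) - x3*(u-x1))),
        mul_nonneg (mul_nonneg (mul_nonneg n3 n4) n5) (sq_nonneg (u-x1)),
        mul_nonneg hu.le (sq_nonneg (u*(u-x1-x2) - x3*(u-x1) - x4*(u-x1-x2))),
        mul_nonneg hu.le (mul_nonneg (mul_nonneg n4 n5) (sq_nonneg (u-x1-x2))),
        mul_pos hu (mul_pos (mul_pos (mul_pos p2 p3) p4) p5),
        mul_pos (mul_pos (mul_pos (mul_pos p1 p2) p3) p4) p5]

lemma key_iff (x1 x2 x3 x4 x5 : ℝ)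
    (n1 : 0 ≤ x1) (n2 : 0 ≤ x2) (n3 : 0 ≤ x3) (n4 : 0 ≤ x4) (n5 : 0 ≤ x5) :
    (∃ μ : ℂ, 2 ≤ (P6 (x1+x2+x3+x4+x5)
        (x1*x3+x1*x4+x1*x5+x2*x4+x2*x5+x3*x5) (x1*x3*x5)).rootMultiplicity μ) ↔
      (x1 * x3 * x5 = 0 ∨
       (x2 = 0 ∧ x4 = 0 ∧ x1 * x3 * x5 ≠ 0 ∧ (x1 = x3 ∨ x1 = x5 ∨ x3 = x5)) ∨
       (x2 = 0 ∧ x1 * x3 * x4 * x5 ≠ 0 ∧ x1 * x4 = (x1 - x5) * (x1 - x3)) ∨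
       (x4 = 0 ∧ x1 * x2 * x3 * x5 ≠ 0 ∧ x2 * x5 = (x1 - x5) * (x3 - x5))) := by
  constructor
  · intro h
    rcases P6_mult_extract _ _ _ h with h0 | ⟨y, hy, hy'⟩
    · exact Or.inl h0
    by_cases hx : x1 * x3 * x5 = 0
    · exact Or.inl hx
    obtain ⟨u, hq, hq'⟩ := complex_to_real _ _ _ y hy hy'
    exact Or.inr (reverse_real x1 x2 x3 x4 x5 n1 n2 n3 n4 n5 hx u hq hq')
  · rintro (h0 | ⟨h2, h4, -, (he | he | he)⟩ | ⟨h2, -, he⟩ | ⟨h4, -, he⟩)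
    · exact P6_mult_of_e3_zero _ _ _ h0
    · exact P6_mult_of_mw _ _ _ x1 x5 n1 (by rw [h2, h4]; linear_combination -he)
        (by rw [h2, h4]; linear_combination (-(x1+x5))*he)
        (by linear_combination (-(x1*x5))*he)
    · exact P6_mult_of_mw _ _ _ x1 x3 n1 (by rw [h2, h4]; linear_combination -he)
        (by rw [h2, h4]; linear_combination (-(x1+x3))*he)
        (by linear_combination (-(x1*x3))*he)
    · exact P6_mult_of_mw _ _ _ x3 x1 n3 (by rw [h2, h4]; linear_combination -he)
        (by rw [h2, h4]; linear_combination (-(x1+x3))*he)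
        (by linear_combination (-(x1*x3))*he)
    · exact P6_mult_of_mw _ _ _ x1 (x3+x4+x5-x1) n1 (by rw [h2]; ring)
        (by rw [h2]; linear_combination -he) (by linear_combination (-x1)*he)
    · exact P6_mult_of_mw _ _ _ x5 (x1+x2+x3-x5) n5 (by rw [h4]; ring)
        (by rw [h4]; linear_combination -he) (by linear_combination (-x5)*he)

lemma normSq_aux (a c : ℂ) (h : a * c = 1) :
    Complex.normSq ((2*Complex.I)⁻¹ * (a - (starRingEnd ℂ) c))
      = (‖a‖ - ‖c‖)^2/4 := by
  have habs : ‖a‖ * ‖c‖ = 1 := by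
    rw [← norm_mul, h, norm_one]
  have hre : (a * c).re = 1 := by rw [h]; rfl
  have hsub := Complex.normSq_sub a ((starRingEnd ℂ) c)
  rw [_root_.map_mul Complex.normSq, map_inv₀ Complex.normSq]
  rw [Complex.normSq_conj] at hsub
  rw [Complex.conj_conj] at hsub
  rw [hsub]
  have sa := Complex.sq_norm a
  have sc := Complex.sq_norm c
  have : Complex.normSq (2*Complex.I) = 4 := by
    simp [Complex.normSq_mul]
    norm_num
  rw [this, hre]
  field_simp
  linear_combination -sa - sc + 2*habs


lemma charpoly_eq (A : Matrix (Fin 6) (Fin 6) ℂ) (hA : IsReciprocal A)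
    (ξ₁ ξ₂ ξ₃ ξ₄ ξ₅ : ℝ)
    (h1 : ξ₁ = (‖A 0 1‖ - ‖A 1 0‖) ^ 2 / 4)
    (h2 : ξ₂ = (‖A 1 2‖ - ‖A 2 1‖) ^ 2 / 4)
    (h3 : ξ₃ = (‖A 2 3‖ - ‖A 3 2‖) ^ 2 / 4)
    (h4 : ξ₄ = (‖A 3 4‖ - ‖A 4 3‖) ^ 2 / 4)
    (h5 : ξ₅ = (‖A 4 5‖ - ‖A 5 4‖) ^ 2 / 4) :
    (imPart A).charpoly = P6 (ξ₁+ξ₂+ξ₃+ξ₄+ξ₅)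
      (ξ₁*ξ₃+ξ₁*ξ₄+ξ₁*ξ₅+ξ₂*ξ₄+ξ₂*ξ₅+ξ₃*ξ₅) (ξ₁*ξ₃*ξ₅) := by
  set M := imPart A with hMdef
  have hM : ∀ i j, M i j = (2*Complex.I)⁻¹ * (A i j - (starRingEnd ℂ) (A j i)) := by
    intro i j
    simp [hMdef, imPart, Matrix.sub_apply, Matrix.smul_apply, Matrix.conjTranspose_apply,
      smul_eq_mul]
  have hz : ∀ i j : Fin 6, ((i:ℤ)-(j:ℤ))^2 ≠ 1 → M i j = 0 := by
    intro i j h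
    have h' : ((j:ℤ)-(i:ℤ))^2 ≠ 1 := by
      rwa [show ((j:ℤ)-(i:ℤ))^2 = ((i:ℤ)-(j:ℤ))^2 by ring]
    rw [hM, hA.1 i j h, hA.1 j i h', map_zero, sub_zero, mul_zero]
  have hsym : ∀ i j, M j i = (starRingEnd ℂ) (M i j) := by
    intro i j
    rw [hM i j, hM j i]
    have hI : (starRingEnd ℂ) ((2*Complex.I)⁻¹) = -(2*Complex.I)⁻¹ := by
      rw [map_inv₀, _root_.map_mul, Complex.conj_I, Complex.conj_ofNat, mul_neg, inv_neg]
    rw [_root_.map_mul, hI, map_sub, Complex.conj_conj]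
    ring
  have hns1 : Complex.normSq (M 0 1) = ξ₁ := by
    rw [hM, normSq_aux _ _ (hA.2 0 1 (by decide))]; exact h1.symm
  have hns2 : Complex.normSq (M 1 2) = ξ₂ := by
    rw [hM, normSq_aux _ _ (hA.2 1 2 (by decide))]; exact h2.symm
  have hns3 : Complex.normSq (M 2 3) = ξ₃ := by
    rw [hM, normSq_aux _ _ (hA.2 2 3 (by decide))]; exact h3.symm
  have hns4 : Complex.normSq (M 3 4) = ξ₄ := by
    rw [hM, normSq_aux _ _ (hA.2 3 4 (by decide))]; exact h4.symm
  have hns5 : Complex.normSq (M 4 5) = ξ₅ := by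
    rw [hM, normSq_aux _ _ (hA.2 4 5 (by decide))]; exact h5.symm
  have hcm : charmatrix M =
      !![X, -C (M 0 1), 0, 0, 0, 0;
         -C (M 1 0), X, -C (M 1 2), 0, 0, 0;
         0, -C (M 2 1), X, -C (M 2 3), 0, 0;
         0, 0, -C (M 3 2), X, -C (M 3 4), 0;
         0, 0, 0, -C (M 4 3), X, -C (M 4 5);
         0, 0, 0, 0, -C (M 5 4), X] := by
    refine Matrix.ext fun i j => ?_
    fin_cases i <;> fin_cases j <;>
      first
        | (rw [charmatrix_apply_eq, hz _ _ (by decide), map_zero, sub_zero]; rfl)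
        | (rw [charmatrix_apply_ne _ _ _ (by decide), hz _ _ (by decide), map_zero, neg_zero]; rfl)
        | (rw [charmatrix_apply_ne _ _ _ (by decide)]; rfl)
  have k1 : (-C (M 0 1)) * (-C (M 1 0)) = C ((ξ₁:ℂ)) := by
    rw [neg_mul_neg, ← C_mul, hsym 0 1, Complex.mul_conj, hns1]
  have k2 : (-C (M 1 2)) * (-C (M 2 1)) = C ((ξ₂:ℂ)) := by
    rw [neg_mul_neg, ← C_mul, hsym 1 2, Complex.mul_conj, hns2]
  have k3 : (-C (M 2 3)) * (-C (M 3 2)) = C ((ξ₃:ℂ)) := by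
    rw [neg_mul_neg, ← C_mul, hsym 2 3, Complex.mul_conj, hns3]
  have k4 : (-C (M 3 4)) * (-C (M 4 3)) = C ((ξ₄:ℂ)) := by
    rw [neg_mul_neg, ← C_mul, hsym 3 4, Complex.mul_conj, hns4]
  have k5 : (-C (M 4 5)) * (-C (M 5 4)) = C ((ξ₅:ℂ)) := by
    rw [neg_mul_neg, ← C_mul, hsym 4 5, Complex.mul_conj, hns5]
  have k1' : C (M 0 1) * C (M 1 0) = C ((ξ₁:ℂ)) := by
    rw [← C_mul, hsym 0 1, Complex.mul_conj, hns1]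
  have k2' : C (M 1 2) * C (M 2 1) = C ((ξ₂:ℂ)) := by
    rw [← C_mul, hsym 1 2, Complex.mul_conj, hns2]
  have k3' : C (M 2 3) * C (M 3 2) = C ((ξ₃:ℂ)) := by
    rw [← C_mul, hsym 2 3, Complex.mul_conj, hns3]
  have k4' : C (M 3 4) * C (M 4 3) = C ((ξ₄:ℂ)) := by
    rw [← C_mul, hsym 3 4, Complex.mul_conj, hns4]
  have k5' : C (M 4 5) * C (M 5 4) = C ((ξ₅:ℂ)) := by
    rw [← C_mul, hsym 4 5, Complex.mul_conj, hns5]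
  rw [show M.charpoly = (charmatrix M).det from rfl, hcm, det_tridiag6]
  simp only [k1, k2, k3, k4, k5]
  unfold P6
  push_cast
  simp only [C_add, C_mul]
  linear_combination (X^2*C ((ξ₁:ℂ))) * k3' + (X^2*(C ((ξ₁:ℂ)) + C ((ξ₂:ℂ)))) * k4'
    + (X^2*(C ((ξ₁:ℂ))+C ((ξ₂:ℂ))+C ((ξ₃:ℂ)))) * k5'
    - (C ((ξ₁:ℂ)) * C (M 4 5) * C (M 5 4)) * k3' - (C ((ξ₁:ℂ)) * C ((ξ₃:ℂ))) * k5'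

/-- Criterion for `Im A` of a 6-by-6 reciprocal matrix to have a multiple
eigenvalue (i.e. for the Kippenhahn curve to have multiple tangent lines). -/
theorem imPart_multiple_eigenvalue_iff_six (A : Matrix (Fin 6) (Fin 6) ℂ) (hA : IsReciprocal A)
    (ξ₁ ξ₂ ξ₃ ξ₄ ξ₅ : ℝ)
    (h1 : ξ₁ = (‖A 0 1‖ - ‖A 1 0‖) ^ 2 / 4)
    (h2 : ξ₂ = (‖A 1 2‖ - ‖A 2 1‖) ^ 2 / 4)
    (h3 : ξ₃ = (‖A 2 3‖ - ‖A 3 2‖) ^ 2 / 4)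
    (h4 : ξ₄ = (‖A 3 4‖ - ‖A 4 3‖) ^ 2 / 4)
    (h5 : ξ₅ = (‖A 4 5‖ - ‖A 5 4‖) ^ 2 / 4) :
    (∃ μ : ℂ, 2 ≤ (imPart A).charpoly.rootMultiplicity μ) ↔
      (ξ₁ * ξ₃ * ξ₅ = 0 ∨
       (ξ₂ = 0 ∧ ξ₄ = 0 ∧ ξ₁ * ξ₃ * ξ₅ ≠ 0 ∧ (ξ₁ = ξ₃ ∨ ξ₁ = ξ₅ ∨ ξ₃ = ξ₅)) ∨
       (ξ₂ = 0 ∧ ξ₁ * ξ₃ * ξ₄ * ξ₅ ≠ 0 ∧ ξ₁ * ξ₄ = (ξ₁ - ξ₅) * (ξ₁ - ξ₃)) ∨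
       (ξ₄ = 0 ∧ ξ₁ * ξ₂ * ξ₃ * ξ₅ ≠ 0 ∧ ξ₂ * ξ₅ = (ξ₁ - ξ₅) * (ξ₃ - ξ₅))) := by
  rw [charpoly_eq A hA ξ₁ ξ₂ ξ₃ ξ₄ ξ₅ h1 h2 h3 h4 h5]
  exact key_iff ξ₁ ξ₂ ξ₃ ξ₄ ξ₅ (by rw [h1]; positivity) (by rw [h2]; positivity)
    (by rw [h3]; positivity) (by rw [h4]; positivity) (by rw [h5]; positivity)
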